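/- Let k be a field of characteristic 0 and A the free associative unital k-algebra on {x_1, x_2}. In the quotient A_Θ = A/S where S is the ideal of all elements of degree ≥ 6 (i.e., the ideal generated by all monomials of total degree 6), the images of e_1 = ι[x_1,[x_1,[[x_1,x_2],x_2]]] and e_2 = ι[[x_1,[x_1,x_2]],[x_1,x_2]] remain linearly independent, and for any t = λe_1 + e_2 with λ ∈ k, the two-sided ideal of A_Θ generated by t equals the k-span of t. -/

import Mathlib

set_option linter.unnecessarySimpa false

/-- The two-sided ideal of the free associative unital `k`-algebra on `X` generated by a
set `G`, viewed as a `k`-submodule: the span of all products `a * g * b` with `g ∈ G`. -/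
noncomputable def twoSidedIdealSpan (k : Type*) [Field k] (X : Type*) (G : Set (FreeAlgebra k X)) :
    Submodule k (FreeAlgebra k X) :=
  Submodule.span k {x | ∃ a g b, g ∈ G ∧ x = a * g * b}

/-- The monomials of total degree `d` in the free associative unital `k`-algebra on `X`. -/
def degMonomials (k : Type*) [Field k] (X : Type*) (d : ℕ) : Set (FreeAlgebra k X) :=
  {x | ∃ w : Fin d → X, x = ((List.ofFn w).map (FreeAlgebra.ι k)).prod}

noncomputable section Stmt13Aux

namespace Stmt13

instance : DecidableEq (FreeMonoid (Fin 2)) := inferInstanceAs (DecidableEq (List (Fin 2)))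

variable (k : Type*) [Field k]

/-- Submodule of the monoid algebra consisting of elements supported on words of length `≥ d`. -/
def Td (d : ℕ) : Submodule k (MonoidAlgebra k (FreeMonoid (Fin 2))) where
  carrier := {f | ∀ w ∈ f.coeff.support, d ≤ FreeMonoid.length w}
  add_mem' := by
    classical
    intro f g hf hg w hw
    rcases Finset.mem_union.1 (Finsupp.support_add hw) with h | h
    exacts [hf w h, hg w h]
  zero_mem' := by simp
  smul_mem' := by
    intro c f hf w hw
    exact hf w (Finsupp.support_smul hw)

theorem mem_Td {d : ℕ} {f : MonoidAlgebra k (FreeMonoid (Fin 2))} :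
    f ∈ Td k d ↔ ∀ w ∈ f.coeff.support, d ≤ FreeMonoid.length w := ⟨fun h => h, fun h => h⟩

theorem Td_mul {m n : ℕ} {f g : MonoidAlgebra k (FreeMonoid (Fin 2))}
    (hf : f ∈ Td k m) (hg : g ∈ Td k n) : f * g ∈ Td k (m + n) := by
  classical
  rw [mem_Td]; intro w hw
  obtain ⟨u, hu, v, hv, rfl⟩ := Finset.mem_mul.1 (MonoidAlgebra.support_coeff_mul_subset f g hw)
  rw [FreeMonoid.length_mul]
  exact add_le_add (hf u hu) (hg v hv)

theorem Td_zero_mem (f : MonoidAlgebra k (FreeMonoid (Fin 2))) : f ∈ Td k 0 := by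
  rw [mem_Td]; intro w hw; exact Nat.zero_le _

theorem single_mem_Td {d : ℕ} {w : FreeMonoid (Fin 2)} (h : d ≤ FreeMonoid.length w) (c : k) :
    MonoidAlgebra.single w c ∈ Td k d := by
  rw [mem_Td]; intro u hu
  rw [Finset.mem_singleton.1 (Finsupp.support_single_subset hu)]
  exact h

/-- The canonical algebra isomorphism with the monoid algebra of the free monoid. -/
def φ : FreeAlgebra k (Fin 2) ≃ₐ[k] MonoidAlgebra k (FreeMonoid (Fin 2)) :=
  FreeAlgebra.equivMonoidAlgebraFreeMonoid

theorem φ_ι (i : Fin 2) : φ k (FreeAlgebra.ι k i) = MonoidAlgebra.single (FreeMonoid.of i) 1 := by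
  simp [φ, FreeAlgebra.equivMonoidAlgebraFreeMonoid, MonoidAlgebra.of_apply]

theorem φ_listProd (l : List (Fin 2)) :
    φ k ((l.map (FreeAlgebra.ι k)).prod) = MonoidAlgebra.single (FreeMonoid.ofList l) 1 := by
  induction l with
  | nil => simpa [MonoidAlgebra.one_def] using rfl
  | cons a l ih =>
      rw [List.map_cons, List.prod_cons, map_mul, ih, φ_ι,
        MonoidAlgebra.single_mul_single, one_mul]
      rfl

theorem listProd_mem_degMonomials (l : List (Fin 2)) (d : ℕ) (hl : l.length = d) :
    (l.map (FreeAlgebra.ι k)).prod ∈ degMonomials k (Fin 2) d := by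
  refine ⟨fun i => l.get (Fin.cast hl.symm i), ?_⟩
  congr 1
  apply List.ext_get
  · simp [hl]
  · intro i h1 h2
    simp [List.get_ofFn]

local notation "S₆" => twoSidedIdealSpan k (Fin 2) (degMonomials k (Fin 2) 6)

theorem S_le_Td : S₆ ≤ (Td k 6).comap ((φ k).toLinearMap) := by
  rw [twoSidedIdealSpan, Submodule.span_le]
  rintro x ⟨a, g, b, ⟨w, rfl⟩, rfl⟩
  simp only [SetLike.mem_coe, Submodule.mem_comap, AlgEquiv.toLinearMap_apply, map_mul]
  have h6 : φ k (((List.ofFn w).map (FreeAlgebra.ι k)).prod) ∈ Td k 6 := by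
    rw [φ_listProd]
    refine single_mem_Td k ?_ 1
    show (6:ℕ) ≤ (List.ofFn w).length
    simp
  have := Td_mul k (Td_mul k (Td_zero_mem k (φ k a)) h6) (Td_zero_mem k (φ k b))
  simpa using this

theorem single_mem_S {w : FreeMonoid (Fin 2)} (hw : 6 ≤ FreeMonoid.length w) (c : k) :
    (φ k).symm (MonoidAlgebra.single w c) ∈ S₆ := by
  set l : List (Fin 2) := FreeMonoid.toList w with hl
  have hw6 : 6 ≤ l.length := hw
  have hsplit : FreeMonoid.ofList (l.take 6) * FreeMonoid.ofList (l.drop 6) = w := by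
    show FreeMonoid.ofList ((l.take 6) ++ (l.drop 6)) = w
    rw [List.take_append_drop]
    exact FreeMonoid.ofList_toList w
  set g : FreeAlgebra k (Fin 2) := ((l.take 6).map (FreeAlgebra.ι k)).prod with hg
  have hgm : g ∈ degMonomials k (Fin 2) 6 :=
    listProd_mem_degMonomials k _ 6 (by simp [List.length_take]; omega)
  have key : (φ k).symm (MonoidAlgebra.single w c)
      = g * (φ k).symm (MonoidAlgebra.single (FreeMonoid.ofList (l.drop 6)) c) := by
    apply (φ k).injective
    rw [map_mul, AlgEquiv.apply_symm_apply, AlgEquiv.apply_symm_apply, hg, φ_listProd,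
      MonoidAlgebra.single_mul_single, one_mul, hsplit]
  rw [key]
  apply Submodule.subset_span
  exact ⟨1, g, (φ k).symm (MonoidAlgebra.single (FreeMonoid.ofList (l.drop 6)) c), hgm,
    by rw [one_mul]⟩

theorem mem_S_of_Td {x : FreeAlgebra k (Fin 2)} (hx : φ k x ∈ Td k 6) : x ∈ S₆ := by
  classical
  have main : ∀ f : MonoidAlgebra k (FreeMonoid (Fin 2)), f ∈ Td k 6 → (φ k).symm f ∈ S₆ := by
    intro f
    induction f using MonoidAlgebra.induction with
    | zero => intro _; simp
    | single_add w c f hw hc ih =>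
        intro hmem
        have hsupp : (MonoidAlgebra.single w c + f).coeff.support
            = (Finsupp.single w c).support ∪ f.coeff.support := by
          rw [MonoidAlgebra.coeff_add, MonoidAlgebra.coeff_single]
          apply Finsupp.support_add_eq
          rw [Finsupp.support_single_ne_zero w hc]
          simp [Finset.disjoint_left, hw]
        rw [mem_Td, hsupp] at hmem
        have h1 : 6 ≤ FreeMonoid.length w := by
          apply hmem
          rw [Finset.mem_union, Finsupp.support_single_ne_zero w hc]
          exact Or.inl (Finset.mem_singleton_self w)
        have h2 : f ∈ Td k 6 := by
          rw [mem_Td]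
          intro u hu
          exact hmem u (Finset.mem_union_right _ hu)
        rw [map_add]
        exact add_mem (single_mem_S k h1 c) (ih h2)
  have := main (φ k x) hx
  rwa [AlgEquiv.symm_apply_apply] at this

/-- The coefficient-at-`w` linear functional. -/
def cAt (w : FreeMonoid (Fin 2)) : MonoidAlgebra k (FreeMonoid (Fin 2)) →ₗ[k] k :=
  Finsupp.lapply w ∘ₗ (MonoidAlgebra.coeffLinearEquiv k).toLinearMap

theorem cAt_single (w u : FreeMonoid (Fin 2)) (c : k) :
    cAt k w (MonoidAlgebra.single u c) = if u = w then c else 0 := Finsupp.single_apply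

theorem cAt_eq_zero_of_Td {f : MonoidAlgebra k (FreeMonoid (Fin 2))} (hf : f ∈ Td k 6)
    {w : FreeMonoid (Fin 2)} (hw : FreeMonoid.length w ≤ 5) : cAt k w f = 0 := by
  by_contra h
  have hmem : w ∈ f.coeff.support := Finsupp.mem_support_iff.2 h
  have := hf w hmem
  omega

theorem lie_mem_Td {m n : ℕ} {x y : FreeAlgebra k (Fin 2)}
    (hx : φ k x ∈ Td k m) (hy : φ k y ∈ Td k n) : φ k ⁅x, y⁆ ∈ Td k (m + n) := by
  rw [Ring.lie_def, map_sub, map_mul, map_mul]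
  refine sub_mem (Td_mul k hx hy) ?_
  rw [Nat.add_comm]
  exact Td_mul k hy hx

theorem Td_one_of_cAt {f : MonoidAlgebra k (FreeMonoid (Fin 2))} (hf : cAt k 1 f = 0) :
    f ∈ Td k 1 := by
  rw [mem_Td]
  intro w hw
  rcases Nat.eq_zero_or_pos (FreeMonoid.length w) with h | h
  swap
  · exact h
  · exfalso
    rw [FreeMonoid.length_eq_zero] at h
    subst h
    exact Finsupp.mem_support_iff.1 hw hf

theorem cAt_one_one : cAt k 1 (1 : MonoidAlgebra k (FreeMonoid (Fin 2))) = 1 := by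
  rw [MonoidAlgebra.one_def]
  show cAt k 1 (MonoidAlgebra.single 1 1) = 1
  rw [cAt_single]
  simp

theorem coeff_e1_w1 :
    cAt k (FreeMonoid.ofList [0,0,0,1,1])
      (φ k ⁅FreeAlgebra.ι k (0:Fin 2), ⁅FreeAlgebra.ι k (0:Fin 2),
        ⁅⁅FreeAlgebra.ι k (0:Fin 2), FreeAlgebra.ι k (1:Fin 2)⁆, FreeAlgebra.ι k (1:Fin 2)⁆⁆⁆) = 1 := by
  simp only [Ring.lie_def, map_sub, map_mul, φ_ι, sub_mul, mul_sub,
    MonoidAlgebra.single_mul_single, one_mul, mul_one, cAt_single]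
  norm_num (config := { decide := true })

theorem coeff_e1_w2 :
    cAt k (FreeMonoid.ofList [0,1,0,0,1])
      (φ k ⁅FreeAlgebra.ι k (0:Fin 2), ⁅FreeAlgebra.ι k (0:Fin 2),
        ⁅⁅FreeAlgebra.ι k (0:Fin 2), FreeAlgebra.ι k (1:Fin 2)⁆, FreeAlgebra.ι k (1:Fin 2)⁆⁆⁆) = 0 := by
  simp only [Ring.lie_def, map_sub, map_mul, φ_ι, sub_mul, mul_sub,
    MonoidAlgebra.single_mul_single, one_mul, mul_one, cAt_single]
  norm_num (config := { decide := true })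

theorem coeff_e2_w1 :
    cAt k (FreeMonoid.ofList [0,0,0,1,1])
      (φ k ⁅⁅FreeAlgebra.ι k (0:Fin 2), ⁅FreeAlgebra.ι k (0:Fin 2), FreeAlgebra.ι k (1:Fin 2)⁆⁆,
        ⁅FreeAlgebra.ι k (0:Fin 2), FreeAlgebra.ι k (1:Fin 2)⁆⁆) = 0 := by
  simp only [Ring.lie_def, map_sub, map_mul, φ_ι, sub_mul, mul_sub,
    MonoidAlgebra.single_mul_single, one_mul, mul_one, cAt_single]
  norm_num (config := { decide := true })

theorem coeff_e2_w2 :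
    cAt k (FreeMonoid.ofList [0,1,0,0,1])
      (φ k ⁅⁅FreeAlgebra.ι k (0:Fin 2), ⁅FreeAlgebra.ι k (0:Fin 2), FreeAlgebra.ι k (1:Fin 2)⁆⁆,
        ⁅FreeAlgebra.ι k (0:Fin 2), FreeAlgebra.ι k (1:Fin 2)⁆⁆) = -3 := by
  simp only [Ring.lie_def, map_sub, map_mul, φ_ι, sub_mul, mul_sub,
    MonoidAlgebra.single_mul_single, one_mul, mul_one, cAt_single]
  norm_num (config := { decide := true })

theorem φι_mem_Td1 (i : Fin 2) : φ k (FreeAlgebra.ι k i) ∈ Td k 1 := by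
  rw [φ_ι]
  exact single_mem_Td k (by simp) 1

theorem e1_mem_Td5 :
    φ k ⁅FreeAlgebra.ι k (0:Fin 2), ⁅FreeAlgebra.ι k (0:Fin 2),
      ⁅⁅FreeAlgebra.ι k (0:Fin 2), FreeAlgebra.ι k (1:Fin 2)⁆, FreeAlgebra.ι k (1:Fin 2)⁆⁆⁆ ∈ Td k 5 := by
  have h0 := φι_mem_Td1 k 0
  have h1 := φι_mem_Td1 k 1
  exact lie_mem_Td k h0 (lie_mem_Td k h0 (lie_mem_Td k (lie_mem_Td k h0 h1) h1))

theorem e2_mem_Td5 :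
    φ k ⁅⁅FreeAlgebra.ι k (0:Fin 2), ⁅FreeAlgebra.ι k (0:Fin 2), FreeAlgebra.ι k (1:Fin 2)⁆⁆,
      ⁅FreeAlgebra.ι k (0:Fin 2), FreeAlgebra.ι k (1:Fin 2)⁆⁆ ∈ Td k 5 := by
  have h0 := φι_mem_Td1 k 0
  have h1 := φι_mem_Td1 k 1
  exact lie_mem_Td k (lie_mem_Td k h0 (lie_mem_Td k h0 h1)) (lie_mem_Td k h0 h1)

/-- The key algebraic identity in any (noncommutative) algebra. -/
theorem key_identity {A T B : MonoidAlgebra k (FreeMonoid (Fin 2))} (ca cb : k) :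
    A * T * B - (ca * cb) • T
      = ca • (T * (B - cb • 1)) + (A - ca • 1) * T * B := by
  simp only [mul_sub, sub_mul, smul_sub, smul_mul_assoc, mul_smul_comm, mul_one, one_mul,
    smul_smul]
  abel

end Stmt13

end Stmt13Aux

open Stmt13 in
theorem stmt_13 (k : Type*) [Field k] [CharZero k] :
    letI x₁ : FreeAlgebra k (Fin 2) := FreeAlgebra.ι k 0
    letI x₂ : FreeAlgebra k (Fin 2) := FreeAlgebra.ι k 1
    letI e₁ : FreeAlgebra k (Fin 2) := ⁅x₁, ⁅x₁, ⁅⁅x₁, x₂⁆, x₂⁆⁆⁆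
    letI e₂ : FreeAlgebra k (Fin 2) := ⁅⁅x₁, ⁅x₁, x₂⁆⁆, ⁅x₁, x₂⁆⁆
    letI S : Submodule k (FreeAlgebra k (Fin 2)) :=
      twoSidedIdealSpan k (Fin 2) (degMonomials k (Fin 2) 6)
    LinearIndependent k ![S.mkQ e₁, S.mkQ e₂] ∧
      ∀ lam : k,
        twoSidedIdealSpan k (Fin 2) {lam • e₁ + e₂} ⊔ S =
          Submodule.span k {lam • e₁ + e₂} ⊔ S := by
  refine ⟨?_, ?_⟩
  · -- linear independence
    rw [Fintype.linearIndependent_iff]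
    intro g hg
    rw [Fin.sum_univ_two] at hg
    simp only [Matrix.cons_val_zero, Matrix.cons_val_one, Matrix.head_cons] at hg
    rw [← map_smul, ← map_smul, ← map_add] at hg
    rw [Submodule.mkQ_apply, Submodule.Quotient.mk_eq_zero] at hg
    have hT6 := S_le_Td k hg
    rw [Submodule.mem_comap, AlgEquiv.toLinearMap_apply, map_add, map_smul, map_smul] at hT6
    have c1 := cAt_eq_zero_of_Td k hT6 (w := FreeMonoid.ofList [0,0,0,1,1]) (le_of_eq rfl)
    have c2 := cAt_eq_zero_of_Td k hT6 (w := FreeMonoid.ofList [0,1,0,0,1]) (le_of_eq rfl)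
    rw [map_add, map_smul, map_smul, coeff_e1_w1, coeff_e2_w1] at c1
    rw [map_add, map_smul, map_smul, coeff_e1_w2, coeff_e2_w2] at c2
    simp only [smul_eq_mul, mul_one, mul_zero, add_zero, zero_add, mul_neg] at c1 c2
    have h3 : (3:k) ≠ 0 := by norm_num
    intro i
    fin_cases i
    · exact c1
    · have := neg_eq_zero.1 c2
      rcases mul_eq_zero.1 this with h | h
      · exact h
      · exact absurd h h3
  · -- the ideal statement
    intro lam
    apply le_antisymm
    · rw [sup_le_iff]
      constructor
      · rw [twoSidedIdealSpan, Submodule.span_le]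
        rintro x ⟨a, g, b, hg, rfl⟩
        rw [Set.mem_singleton_iff] at hg
        subst hg
        set t := lam • ⁅FreeAlgebra.ι k (0:Fin 2), ⁅FreeAlgebra.ι k (0:Fin 2),
            ⁅⁅FreeAlgebra.ι k (0:Fin 2), FreeAlgebra.ι k (1:Fin 2)⁆, FreeAlgebra.ι k (1:Fin 2)⁆⁆⁆
          + ⁅⁅FreeAlgebra.ι k (0:Fin 2), ⁅FreeAlgebra.ι k (0:Fin 2), FreeAlgebra.ι k (1:Fin 2)⁆⁆,
            ⁅FreeAlgebra.ι k (0:Fin 2), FreeAlgebra.ι k (1:Fin 2)⁆⁆ with ht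
        have hT : φ k t ∈ Td k 5 := by
          rw [ht, map_add, map_smul]
          exact add_mem (Submodule.smul_mem _ _ (e1_mem_Td5 k)) (e2_mem_Td5 k)
        set ca := cAt k 1 (φ k a) with hca
        set cb := cAt k 1 (φ k b) with hcb
        have hA1 : φ k a - ca • 1 ∈ Td k 1 := by
          apply Td_one_of_cAt
          rw [map_sub, map_smul, cAt_one_one, hca]
          simp
        have hB1 : φ k b - cb • 1 ∈ Td k 1 := by
          apply Td_one_of_cAt
          rw [map_sub, map_smul, cAt_one_one, hcb]
          simp
        have key : a * t * b - (ca * cb) • t ∈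
            twoSidedIdealSpan k (Fin 2) (degMonomials k (Fin 2) 6) := by
          apply mem_S_of_Td
          have expand : φ k (a * t * b - (ca * cb) • t)
              = ca • (φ k t * (φ k b - cb • 1)) + (φ k a - ca • 1) * φ k t * φ k b := by
            rw [map_sub, map_smul, map_mul, map_mul]
            exact key_identity k ca cb
          rw [expand]
          refine add_mem (Submodule.smul_mem _ _ ?_) ?_
          · exact Td_mul k hT hB1
          · have := Td_mul k (Td_mul k hA1 hT) (Td_zero_mem k (φ k b))
            simpa using this
        have hc : (ca * cb) • t ∈ Submodule.span k {t} :=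
          Submodule.smul_mem _ _ (Submodule.subset_span rfl)
        have heq : a * t * b = (a * t * b - (ca * cb) • t) + (ca * cb) • t := by
          abel
        rw [SetLike.mem_coe, heq]
        exact add_mem (Submodule.mem_sup_right key) (Submodule.mem_sup_left hc)
      · exact le_sup_right
    · apply sup_le_sup_right
      rw [Submodule.span_le]
      intro x hx
      apply Submodule.subset_span
      exact ⟨1, x, 1, hx, by rw [one_mul, mul_one]⟩
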